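/- Let β > 0, η ∈ [0,1), and let (s_n)_{n≥0}, (w_n)_{n≥0} be sequences in ℝ^M with s_{n+1} = s_n + γ_n·(w_n − s_n) for stepsizes γ_n ≥ 0; write Δs_n = γ_n·(w_n − s_n) and assume β·Δs_n(j) ≤ 1 for all n and all arms j. Then for every K ≥ 0 and every arm j: β·s_0(j) + Σ_{n=0}^K β·Δs_n(j) − ln(Σ_{k=1}^M exp(β·s_0(k))) ≤ Σ_{n=0}^K [ (β/(1−η))·(σ(s_n) − (η/M)·𝟙)·Δs_n + ((e−2)β²/(1−η))·σ(s_n)·(Δs_n)² ], where · denotes the Euclidean inner product on ℝ^M, 𝟙 is the all-ones vector in ℝ^M, (Δs_n)² is the vector of componentwise squares of Δs_n, and e is Euler's number. -/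

import Mathlib

open Finset

/-- The Hedge stationary policy. -/
noncomputable def hedge (β η : ℝ) {M : ℕ} (s : Fin M → ℝ) (j : Fin M) : ℝ :=
  (1 - η) * Real.exp (β * s j) / (∑ k, Real.exp (β * s k)) + η / M

lemma exp_quad {x : ℝ} (hx : x ≤ 1) :
    Real.exp x ≤ 1 + x + (Real.exp 1 - 2) * x ^ 2 := by
  set c : ℝ := Real.exp 1 - 2 with hcdef
  have hce : (2.7182818283 : ℝ) < Real.exp 1 := Real.exp_one_gt_d9
  have hce' : Real.exp 1 < 2.7182818286 := Real.exp_one_lt_d9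
  have hc2 : (1/2 : ℝ) < c := by rw [hcdef]; norm_num; linarith
  have hc1 : c < 1 := by rw [hcdef]; norm_num; linarith
  have hc0 : 0 < c := by linarith
  set f : ℝ → ℝ := fun y => (1 + y + c * y ^ 2) * Real.exp (-y) with hfdef
  have hder : ∀ y : ℝ, HasDerivAt f (Real.exp (-y) * (y * (2*c - 1 - c*y))) y := by
    intro y
    have h1 : HasDerivAt (fun y : ℝ => 1 + y + c * y ^ 2) (1 + c * (2*y)) y := by
      have := ((hasDerivAt_id y).const_add (1:ℝ)).add ((hasDerivAt_pow 2 y).const_mul c)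
      exact this.congr_deriv (by push_cast; ring)
    have h2 : HasDerivAt (fun y : ℝ => Real.exp (-y)) (Real.exp (-y) * (-1)) y :=
      (hasDerivAt_neg y).exp
    have := h1.mul h2
    exact this.congr_deriv (by ring)
  have hdiff : Differentiable ℝ f := fun y => (hder y).differentiableAt
  have hcont : Continuous f := hdiff.continuous
  have hderiv : ∀ y : ℝ, deriv f y = Real.exp (-y) * (y * (2*c - 1 - c*y)) :=
    fun y => (hder y).deriv
  set a : ℝ := 2 - 1/c with hadef
  have ha0 : 0 < a := by
    rw [hadef]
    have : 1/c < 2 := by rw [div_lt_iff₀ hc0]; linarith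
    linarith
  have ha1 : a < 1 := by
    rw [hadef]
    have : 1 < 1/c := by rw [lt_div_iff₀ hc0]; linarith
    linarith
  have hca : c * a = 2*c - 1 := by rw [hadef]; field_simp
  have hf0 : f 0 = 1 := by simp [hfdef]
  have hf1 : f 1 = 1 := by
    simp only [hfdef]
    have : 1 + 1 + c * 1 ^ 2 = Real.exp 1 := by rw [hcdef]; ring
    rw [this, ← Real.exp_add]
    norm_num
  have key : 1 ≤ f x := by
    rcases le_or_gt x 0 with h0 | h0
    · have hA : AntitoneOn f (Set.Iic 0) := by
        refine antitoneOn_of_deriv_nonpos (convex_Iic 0) hcont.continuousOn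
          hdiff.differentiableOn (fun z hz => ?_)
        rw [interior_Iic] at hz
        rw [hderiv z]
        have hz0 : z < 0 := hz
        have : 2*c - 1 - c*z > 0 := by nlinarith
        have : z * (2*c - 1 - c*z) < 0 := mul_neg_of_neg_of_pos hz0 this
        exact le_of_lt (mul_neg_of_pos_of_neg (Real.exp_pos _) this)
      have := hA (Set.mem_Iic.mpr h0) (Set.mem_Iic.mpr le_rfl) h0
      linarith [hf0, this]
    · rcases le_or_gt x a with hxa | hxa
      · have hMo : MonotoneOn f (Set.Icc 0 a) := by
          refine monotoneOn_of_deriv_nonneg (convex_Icc 0 a) hcont.continuousOn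
            hdiff.differentiableOn (fun z hz => ?_)
          rw [interior_Icc] at hz
          rw [hderiv z]
          have : 0 < 2*c - 1 - c*z := by nlinarith [hz.2, mul_pos hc0 (sub_pos.mpr hz.2)]
          exact mul_nonneg (Real.exp_pos _).le (mul_nonneg hz.1.le this.le)
        have := hMo (Set.mem_Icc.mpr ⟨le_rfl, ha0.le⟩) (Set.mem_Icc.mpr ⟨h0.le, hxa⟩) h0.le
        linarith [hf0]
      · have hA : AntitoneOn f (Set.Icc a 1) := by
          refine antitoneOn_of_deriv_nonpos (convex_Icc a 1) hcont.continuousOn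
            hdiff.differentiableOn (fun z hz => ?_)
          rw [interior_Icc] at hz
          rw [hderiv z]
          have hz0 : 0 < z := lt_trans ha0 hz.1
          have : 2*c - 1 - c*z < 0 := by nlinarith [hz.1, mul_pos hc0 (sub_pos.mpr hz.1)]
          have : z * (2*c - 1 - c*z) < 0 := mul_neg_of_pos_of_neg hz0 this
          exact le_of_lt (mul_neg_of_pos_of_neg (Real.exp_pos _) this)
        have := hA (Set.mem_Icc.mpr ⟨hxa.le, hx⟩) (Set.mem_Icc.mpr ⟨ha1.le, le_rfl⟩) hx
        linarith [hf1]
  have hmul : Real.exp x * Real.exp (-x) = 1 := by rw [← Real.exp_add]; simp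
  have hfx : f x = (1 + x + c * x ^ 2) * Real.exp (-x) := by rw [hfdef]
  rw [hfx] at key
  nlinarith [Real.exp_pos x, mul_le_mul_of_nonneg_left key (Real.exp_pos x).le, hmul]

/-- Theorem 5 of the paper: the cumulative state change bound. For the
iteration `s_{n+1} = s_n + γ_n (w_n − s_n)` with `Δs_n = γ_n (w_n − s_n)` and
`β·Δs_n(j) ≤ 1`, for every `K` and arm `j`,
`β s_0(j) + Σ_{n=0}^K β Δs_n(j) − ln Σ_k exp(β s_0(k))
  ≤ Σ_{n=0}^K [ (β/(1−η))·(σ(s_n) − (η/M)𝟙)·Δs_n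
              + ((e−2)β²/(1−η))·σ(s_n)·(Δs_n)² ]`. -/
theorem cumulative_state_change {M : ℕ} (hM : 1 ≤ M)
    (β η : ℝ) (hβ : 0 < β) (hη0 : 0 ≤ η) (hη1 : η < 1)
    (s w : ℕ → Fin M → ℝ) (γ : ℕ → ℝ) (hγ : ∀ n, 0 ≤ γ n)
    (hrec : ∀ n, s (n + 1) = fun j => s n j + γ n * (w n j - s n j))
    (hΔ : ∀ n (j : Fin M), β * (γ n * (w n j - s n j)) ≤ 1) :
    ∀ (K : ℕ) (j : Fin M),
      β * s 0 j + (∑ n ∈ Finset.range (K + 1), β * (γ n * (w n j - s n j)))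
          - Real.log (∑ k, Real.exp (β * s 0 k))
        ≤ ∑ n ∈ Finset.range (K + 1),
            ((β / (1 - η)) *
              (∑ k, (hedge β η (s n) k - η / M) * (γ n * (w n k - s n k)))
            + ((Real.exp 1 - 2) * β ^ 2 / (1 - η)) *
              (∑ k, hedge β η (s n) k * (γ n * (w n k - s n k)) ^ 2)) := by
  intro K j
  haveI : Nonempty (Fin M) := ⟨⟨0, hM⟩⟩
  have hη : (0:ℝ) < 1 - η := by linarith
  have hc0 : (0:ℝ) ≤ Real.exp 1 - 2 := by
    have := Real.exp_one_gt_d9; norm_num at this ⊢; linarith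
  set c : ℝ := Real.exp 1 - 2 with hcdef
  set Δ : ℕ → Fin M → ℝ := fun n k => γ n * (w n k - s n k) with hΔdef
  set S : ℕ → ℝ := fun n => ∑ k, Real.exp (β * s n k) with hSdef
  have hSpos : ∀ n, 0 < S n := fun n =>
    Finset.sum_pos (fun k _ => Real.exp_pos _) Finset.univ_nonempty
  set R : ℕ → ℝ := fun n =>
      (β / (1 - η)) * (∑ k, (hedge β η (s n) k - η / M) * Δ n k)
      + (c * β ^ 2 / (1 - η)) * (∑ k, hedge β η (s n) k * (Δ n k) ^ 2) with hRdef
  have hstep : ∀ n, Real.log (S (n+1)) ≤ Real.log (S n) + R n := by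
    intro n
    set X : ℝ := ∑ k, (Real.exp (β * s n k) / S n) * (β * Δ n k + c * β^2 * (Δ n k)^2)
      with hXdef
    have hSn := hSpos n
    have h1 : S (n+1) ≤ S n * (1 + X) := by
      have e0 : S (n+1) = ∑ k, Real.exp (β * s n k) * Real.exp (β * Δ n k) := by
        simp only [hSdef, hrec n, hΔdef]
        refine Finset.sum_congr rfl fun k _ => ?_
        rw [← Real.exp_add]; ring_nf
      have eX : S n * X = ∑ k, Real.exp (β * s n k) * (β * Δ n k + c * β^2 * (Δ n k)^2) := by
        rw [hXdef, Finset.mul_sum]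
        refine Finset.sum_congr rfl fun k _ => ?_
        field_simp
      rw [e0, mul_add, mul_one, eX]
      have : S n + ∑ k, Real.exp (β * s n k) * (β * Δ n k + c * β^2 * (Δ n k)^2)
          = ∑ k, Real.exp (β * s n k) * (1 + β * Δ n k + c * (β * Δ n k)^2) := by
        simp only [hSdef]
        rw [← Finset.sum_add_distrib]
        exact Finset.sum_congr rfl fun k _ => by ring
      rw [this]
      exact Finset.sum_le_sum fun k _ =>
        mul_le_mul_of_nonneg_left (exp_quad (hΔ n k)) (Real.exp_pos _).le
    have h2 : Real.log (S (n+1)) ≤ Real.log (S n) + X := by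
      have h1' : S (n+1) ≤ S n * Real.exp X := by
        have := Real.add_one_le_exp X
        nlinarith
      calc Real.log (S (n+1)) ≤ Real.log (S n * Real.exp X) :=
            Real.log_le_log (hSpos (n+1)) h1'
        _ = Real.log (S n) + X := by
            rw [Real.log_mul (ne_of_gt hSn) (Real.exp_ne_zero X), Real.log_exp]
    have hhedge : ∀ k, hedge β η (s n) k - η / M
        = (1 - η) * (Real.exp (β * s n k) / S n) := by
      intro k
      simp only [hedge, hSdef]
      ring
    have hX_le : X ≤ R n := by
      have e1 : (β / (1 - η)) * (∑ k, (hedge β η (s n) k - η / M) * Δ n k)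
          = ∑ k, (Real.exp (β * s n k) / S n) * (β * Δ n k) := by
        rw [Finset.mul_sum]
        refine Finset.sum_congr rfl fun k _ => ?_
        rw [hhedge k]
        field_simp
      have e2 : ∑ k, (Real.exp (β * s n k) / S n) * (c * β^2 * (Δ n k)^2)
          ≤ (c * β ^ 2 / (1 - η)) * (∑ k, hedge β η (s n) k * (Δ n k) ^ 2) := by
        rw [Finset.mul_sum]
        refine Finset.sum_le_sum fun k _ => ?_
        have hp : (1 - η) * (Real.exp (β * s n k) / S n) ≤ hedge β η (s n) k := by
          have h := hhedge k
          have hηM : 0 ≤ η / M := div_nonneg hη0 (Nat.cast_nonneg M)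
          linarith
        have hΔ2 : (0:ℝ) ≤ (Δ n k)^2 := sq_nonneg _
        have hcb : (0:ℝ) ≤ c * β^2 / (1 - η) := by positivity
        calc (Real.exp (β * s n k) / S n) * (c * β^2 * (Δ n k)^2)
            = (c * β^2 / (1 - η)) * (((1 - η) * (Real.exp (β * s n k) / S n)) * (Δ n k)^2) := by
              field_simp
          _ ≤ (c * β^2 / (1 - η)) * (hedge β η (s n) k * (Δ n k)^2) :=
              mul_le_mul_of_nonneg_left (mul_le_mul_of_nonneg_right hp hΔ2) hcb
      have hXsplit : X = (∑ k, (Real.exp (β * s n k) / S n) * (β * Δ n k))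
          + ∑ k, (Real.exp (β * s n k) / S n) * (c * β^2 * (Δ n k)^2) := by
        rw [hXdef, ← Finset.sum_add_distrib]
        exact Finset.sum_congr rfl fun k _ => by ring
      rw [hXsplit, hRdef]
      simp only
      linarith
    linarith
  have hΦ : ∀ K : ℕ, Real.log (S (K+1)) ≤ Real.log (S 0) + ∑ n ∈ Finset.range (K+1), R n := by
    intro K
    induction K with
    | zero => simpa using hstep 0
    | succ K ih =>
        rw [Finset.sum_range_succ]
        have := hstep (K+1)
        linarith
  have htel : s (K+1) j = s 0 j + ∑ n ∈ Finset.range (K+1), Δ n j := by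
    induction K with
    | zero => simp [hrec 0, hΔdef]
    | succ K ih =>
        rw [Finset.sum_range_succ, hrec (K+1)]
        simp only [hΔdef] at ih ⊢
        rw [ih]; ring
  have hfin : β * s (K+1) j ≤ Real.log (S (K+1)) := by
    have h1 : Real.exp (β * s (K+1) j) ≤ S (K+1) :=
      Finset.single_le_sum (f := fun k => Real.exp (β * s (K+1) k))
        (fun k _ => (Real.exp_pos _).le) (Finset.mem_univ j)
    calc β * s (K+1) j = Real.log (Real.exp (β * s (K+1) j)) := (Real.log_exp _).symm
      _ ≤ Real.log (S (K+1)) := Real.log_le_log (Real.exp_pos _) h1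
  have hβs : β * s (K+1) j = β * s 0 j + ∑ n ∈ Finset.range (K+1), β * Δ n j := by
    rw [htel, mul_add, Finset.mul_sum]
  have hgoal : β * s 0 j + (∑ n ∈ Finset.range (K + 1), β * Δ n j)
      - Real.log (S 0) ≤ ∑ n ∈ Finset.range (K + 1), R n := by
    linarith [hΦ K, hfin]
  simpa only [hRdef, hΔdef, hSdef] using hgoal
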